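/- Let d, v, U ∈ ℝ³, let G be a real 3×3 matrix, and let M ∈ ℝ satisfy ‖d‖ ≤ 1 and ‖v‖ ≤ M. Then ‖U‖² − ⟨d × U, G v⟩ + (M²/4) ‖G‖_F² ≥ ‖ U + (1/2) • (d × (G v)) ‖² + (1/4) ⟨d, G v⟩², where G v denotes the matrix–vector product. -/

import Mathlib

open scoped RealInnerProductSpace

/-- The cross product on Euclidean `ℝ³`. -/
noncomputable def cross3 (a b : EuclideanSpace ℝ (Fin 3)) : EuclideanSpace ℝ (Fin 3) :=
  (WithLp.equiv 2 (Fin 3 → ℝ)).symm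
    (crossProduct (WithLp.equiv 2 (Fin 3 → ℝ) a) (WithLp.equiv 2 (Fin 3 → ℝ) b))

/-- The matrix–vector product of a `3 × 3` matrix with a Euclidean vector. -/
noncomputable def matVec (G : Matrix (Fin 3) (Fin 3) ℝ) (v : EuclideanSpace ℝ (Fin 3)) :
    EuclideanSpace ℝ (Fin 3) :=
  (WithLp.equiv 2 (Fin 3 → ℝ)).symm (G.mulVec (WithLp.equiv 2 (Fin 3 → ℝ) v))


lemma norm_sq_3 (x : EuclideanSpace ℝ (Fin 3)) : ‖x‖^2 = x 0^2 + x 1^2 + x 2^2 := by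
  rw [← real_inner_self_eq_norm_sq]
  simp only [PiLp.inner_apply, Fin.sum_univ_three, RCLike.inner_apply, conj_trivial]; ring

lemma inner_3 (x y : EuclideanSpace ℝ (Fin 3)) : ⟪x,y⟫ = x 0 * y 0 + x 1 * y 1 + x 2 * y 2 := by
  simp [PiLp.inner_apply, Fin.sum_univ_three]; ring

lemma cross3_apply (a b : EuclideanSpace ℝ (Fin 3)) :
    cross3 a b 0 = a 1 * b 2 - a 2 * b 1 ∧ cross3 a b 1 = a 2 * b 0 - a 0 * b 2 ∧
    cross3 a b 2 = a 0 * b 1 - a 1 * b 0 := by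
  refine ⟨?_, ?_, ?_⟩ <;> simp [cross3, crossProduct]

lemma triple (d U w : EuclideanSpace ℝ (Fin 3)) : ⟪cross3 d U, w⟫ = -⟪U, cross3 d w⟫ := by
  obtain ⟨h0, h1, h2⟩ := cross3_apply d U
  obtain ⟨g0, g1, g2⟩ := cross3_apply d w
  rw [inner_3, inner_3, h0, h1, h2, g0, g1, g2]; ring

lemma lagrange (d w : EuclideanSpace ℝ (Fin 3)) :
    ‖cross3 d w‖^2 = ‖d‖^2 * ‖w‖^2 - ⟪d, w⟫^2 := by
  obtain ⟨g0, g1, g2⟩ := cross3_apply d w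
  rw [norm_sq_3, norm_sq_3, norm_sq_3, inner_3, g0, g1, g2]; ring

lemma matVec_norm_sq (G : Matrix (Fin 3) (Fin 3) ℝ) (v : EuclideanSpace ℝ (Fin 3)) :
    ‖matVec G v‖^2 ≤ ‖v‖^2 * (∑ k, ∑ l, (G k l)^2) := by
  have hv : ‖v‖^2 = v 0^2 + v 1^2 + v 2^2 := norm_sq_3 v
  have hm : ‖matVec G v‖^2 = (matVec G v) 0^2 + (matVec G v) 1^2 + (matVec G v) 2^2 :=
    norm_sq_3 _
  have ha : ∀ i, matVec G v i = G i 0 * v 0 + G i 1 * v 1 + G i 2 * v 2 := by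
    intro i; simp [matVec, Matrix.mulVec, dotProduct, Fin.sum_univ_three]
  rw [hm, hv, ha 0, ha 1, ha 2]
  simp only [Fin.sum_univ_three]
  nlinarith [sq_nonneg (G 0 0 * v 1 - G 0 1 * v 0), sq_nonneg (G 0 0 * v 2 - G 0 2 * v 0),
    sq_nonneg (G 0 1 * v 2 - G 0 2 * v 1), sq_nonneg (G 1 0 * v 1 - G 1 1 * v 0),
    sq_nonneg (G 1 0 * v 2 - G 1 2 * v 0), sq_nonneg (G 1 1 * v 2 - G 1 2 * v 1),
    sq_nonneg (G 2 0 * v 1 - G 2 1 * v 0), sq_nonneg (G 2 0 * v 2 - G 2 2 * v 0),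
    sq_nonneg (G 2 1 * v 2 - G 2 2 * v 1)]

/-- Pointwise convexification of the Ericksen stress term: for `‖d‖ ≤ 1` and
`‖v‖ ≤ M`, the quantity `‖U‖² - ⟨d × U, G v⟩ + (M²/4) ‖G‖_F²` dominates
`‖U + (1/2) d × (G v)‖² + (1/4) ⟨d, G v⟩²`. -/
theorem ericksen_pointwise_convexification
    (d v U : EuclideanSpace ℝ (Fin 3)) (G : Matrix (Fin 3) (Fin 3) ℝ) (M : ℝ)
    (hd : ‖d‖ ≤ 1) (hv : ‖v‖ ≤ M) :
    ‖U‖ ^ 2 - ⟪cross3 d U, matVec G v⟫ + (M ^ 2 / 4) * (∑ k, ∑ l, (G k l) ^ 2)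
      ≥ ‖U + (1/2 : ℝ) • cross3 d (matVec G v)‖ ^ 2 + (1/4) * ⟪d, matVec G v⟫ ^ 2 := by
  set w := matVec G v with hw
  have hexp : ‖U + (1/2 : ℝ) • cross3 d w‖ ^ 2
      = ‖U‖^2 + ⟪U, cross3 d w⟫ + (1/4) * ‖cross3 d w‖^2 := by
    rw [norm_add_sq_real, real_inner_smul_right, norm_smul]
    simp; ring
  rw [hexp, triple d U w, lagrange d w]
  have h1 : ‖w‖^2 ≤ ‖v‖^2 * (∑ k, ∑ l, (G k l)^2) := matVec_norm_sq G v
  have hS : (0:ℝ) ≤ ∑ k, ∑ l, (G k l)^2 := by positivity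
  have hd2 : ‖d‖^2 ≤ 1 := by nlinarith [norm_nonneg d]
  have hv2 : ‖v‖^2 ≤ M^2 := by nlinarith [norm_nonneg v]
  nlinarith [norm_nonneg w, sq_nonneg ‖w‖, mul_le_mul_of_nonneg_right hv2 hS,
    mul_nonneg (sq_nonneg ‖w‖) (sub_nonneg.2 hd2)]
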